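/- On Ω^i_d = K^{d−i}_d, the quantum de Rham differential δ and Koszul differential κ satisfy the homotopy identity (−q⁻¹)² δκ + κδ = ((−q⁻¹)²)^i (d)_{q²} · Id, where (d)_{q²} = 1 + q² + ⋯ + q^{2(d−1)}. -/

import Mathlib

/-- Generators of the algebra `Ω(n) = S_q(V_n) ⊗ Λ_q(V_n)`: `Sum.inl i` stands for
`x_i = e_i ⊗ 1` (symmetric generator) and `Sum.inr i` for `y_i = 1 ⊗ e_i` (exterior
generator). -/
abbrev OmegaLetter (n : ℕ) := Fin n ⊕ Fin n

/-- The defining relations of the algebra `Ω(n) = S_q(V_n) ⊗ Λ_q(V_n)` with product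
twisted by the braiding (quantum de Rham algebra). -/
inductive omegaRel (K : Type*) [Field K] (q : K) (n : ℕ) :
    FreeAlgebra K (OmegaLetter n) → FreeAlgebra K (OmegaLetter n) → Prop
  | xx {i j : Fin n} (h : j < i) :
      omegaRel K q n (FreeAlgebra.ι K (Sum.inl i) * FreeAlgebra.ι K (Sum.inl j))
        (q • (FreeAlgebra.ι K (Sum.inl j) * FreeAlgebra.ι K (Sum.inl i)))
  | yx_gt {i j : Fin n} (h : j < i) :
      omegaRel K q n (FreeAlgebra.ι K (Sum.inr j) * FreeAlgebra.ι K (Sum.inl i))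
        (FreeAlgebra.ι K (Sum.inl i) * FreeAlgebra.ι K (Sum.inr j))
  | yx_eq (i : Fin n) :
      omegaRel K q n (FreeAlgebra.ι K (Sum.inr i) * FreeAlgebra.ι K (Sum.inl i))
        (q • (FreeAlgebra.ι K (Sum.inl i) * FreeAlgebra.ι K (Sum.inr i)))
  | yx_lt {i j : Fin n} (h : i < j) :
      omegaRel K q n (FreeAlgebra.ι K (Sum.inr j) * FreeAlgebra.ι K (Sum.inl i))
        ((q - q⁻¹) • (FreeAlgebra.ι K (Sum.inl j) * FreeAlgebra.ι K (Sum.inr i)) +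
          FreeAlgebra.ι K (Sum.inl i) * FreeAlgebra.ι K (Sum.inr j))
  | yy {i j : Fin n} (h : j < i) :
      omegaRel K q n (FreeAlgebra.ι K (Sum.inr i) * FreeAlgebra.ι K (Sum.inr j))
        ((-q⁻¹) • (FreeAlgebra.ι K (Sum.inr j) * FreeAlgebra.ι K (Sum.inr i)))
  | ysq (i : Fin n) :
      omegaRel K q n (FreeAlgebra.ι K (Sum.inr i) * FreeAlgebra.ι K (Sum.inr i)) 0

/-- The algebra `Ω(n) = S_q(V_n) ⊗ Λ_q(V_n)` with braided product, presented by
generators and relations. -/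
abbrev OmegaAlg (K : Type*) [Field K] (q : K) (n : ℕ) := RingQuot (omegaRel K q n)

namespace OmegaAlg

variable (K : Type*) [Field K] (q : K) (n : ℕ)

/-- The generators of `Ω(n)`. -/
noncomputable def gen (g : OmegaLetter n) : OmegaAlg K q n :=
  RingQuot.mkAlgHom K (omegaRel K q n) (FreeAlgebra.ι K g)

/-- The symmetric generator `x_i = e_i ⊗ 1`. -/
noncomputable def X (i : Fin n) : OmegaAlg K q n := gen K q n (Sum.inl i)

/-- The exterior generator `y_i = 1 ⊗ e_i`. -/
noncomputable def Y (i : Fin n) : OmegaAlg K q n := gen K q n (Sum.inr i)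

/-- The image in `Ω(n)` of a word in the generators. -/
noncomputable def wordProd (w : List (OmegaLetter n)) : OmegaAlg K q n :=
  (w.map (gen K q n)).prod

/-- The number of symmetric letters `x` in a word. -/
def countX (w : List (OmegaLetter n)) : ℕ := (w.filter Sum.isLeft).length

/-- The number of exterior letters `y` in a word. -/
def countY (w : List (OmegaLetter n)) : ℕ := (w.filter Sum.isRight).length

/-- The bigraded piece `Ω^i_d(n) = S_q^{d-i}(n) ⊗ Λ_q^i(n)`: the span of the words with
`d` letters, `i` of which are exterior. -/
noncomputable def piece (i d : ℕ) : Submodule K (OmegaAlg K q n) :=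
  Submodule.span K {a : OmegaAlg K q n | ∃ w : List (OmegaLetter n),
    w.length = d ∧ countY n w = i ∧ a = wordProd K q n w}

/-- The property that `δ` is the quantum de Rham differential: on the word monomials of
`Ω(n)` it deconcatenates one symmetric letter (with the appropriate braiding twist) and
multiplies it into the exterior factor, replacing one `x`-letter by the corresponding
`y`-letter. -/
def IsDeRham (δ : OmegaAlg K q n →ₗ[K] OmegaAlg K q n) : Prop :=
  ∀ w : List (OmegaLetter n),
    δ (wordProd K q n w) =
      ∑ k : Fin w.length,
        Sum.elim
          (fun i : Fin n =>
            ((-q⁻¹) ^ countY n (w.take k) * q ^ countX n (w.drop (k + 1))) •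
              wordProd K q n (w.set k (Sum.inr i)))
          (fun _ : Fin n => (0 : OmegaAlg K q n))
          (w.get k)

/-- The property that `κ` is the quantum Koszul differential: on the word monomials of
`Ω(n)` it deconcatenates one exterior letter (with the appropriate braiding twist) and
multiplies it into the symmetric factor, replacing one `y`-letter by the corresponding
`x`-letter. -/
def IsKoszul (κ : OmegaAlg K q n →ₗ[K] OmegaAlg K q n) : Prop :=
  ∀ w : List (OmegaLetter n),
    κ (wordProd K q n w) =
      ∑ k : Fin w.length,
        Sum.elim
          (fun _ : Fin n => (0 : OmegaAlg K q n))
          (fun i : Fin n =>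
            ((-q⁻¹) ^ countY n (w.take k) * q ^ countX n (w.drop (k + 1))) •
              wordProd K q n (w.set k (Sum.inl i)))
          (w.get k)

end OmegaAlg


namespace OmegaAlg

variable (K : Type*) [Field K] (q : K) (n : ℕ)

lemma wordProd_nil : wordProd K q n [] = 1 := rfl

lemma wordProd_cons (a : OmegaLetter n) (w : List (OmegaLetter n)) :
    wordProd K q n (a :: w) = gen K q n a * wordProd K q n w := by
  simp [wordProd]

lemma countX_cons_inl (i : Fin n) (w : List (OmegaLetter n)) :
    countX n (Sum.inl i :: w) = countX n w + 1 := by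
  simp [countX, List.filter_cons]

lemma countX_cons_inr (i : Fin n) (w : List (OmegaLetter n)) :
    countX n (Sum.inr i :: w) = countX n w := by
  simp [countX, List.filter_cons]

lemma countY_cons_inl (i : Fin n) (w : List (OmegaLetter n)) :
    countY n (Sum.inl i :: w) = countY n w := by
  simp [countY, List.filter_cons]

lemma countY_cons_inr (i : Fin n) (w : List (OmegaLetter n)) :
    countY n (Sum.inr i :: w) = countY n w + 1 := by
  simp [countY, List.filter_cons]

lemma countX_add_countY (w : List (OmegaLetter n)) :
    countX n w + countY n w = w.length := by
  induction w with
  | nil => rfl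
  | cons a w ih =>
    rcases a with i | i
    · rw [countX_cons_inl, countY_cons_inl, List.length_cons]; omega
    · rw [countX_cons_inr, countY_cons_inr, List.length_cons]; omega

lemma countX_set_inr : ∀ (w : List (OmegaLetter n)) (k : ℕ) (i j : Fin n),
    w[k]? = some (Sum.inl i) → countX n (w.set k (Sum.inr j)) + 1 = countX n w := by
  intro w
  induction w with
  | nil => intro k i j h; simp at h
  | cons a w ih =>
    intro k i j h
    cases k with
    | zero =>
      simp only [List.getElem?_cons_zero] at h
      injection h with h; subst h
      simp [List.set, countX_cons_inl, countX_cons_inr]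
    | succ k =>
      simp only [List.getElem?_cons_succ] at h
      rcases a with i' | i'
      · simp only [List.set, countX_cons_inl]
        have := ih k i j h
        omega
      · simp only [List.set, countX_cons_inr]
        exact ih k i j h

lemma countX_set_inl : ∀ (w : List (OmegaLetter n)) (k : ℕ) (i j : Fin n),
    w[k]? = some (Sum.inr i) → countX n (w.set k (Sum.inl j)) = countX n w + 1 := by
  intro w
  induction w with
  | nil => intro k i j h; simp at h
  | cons a w ih =>
    intro k i j h
    cases k with
    | zero =>
      simp only [List.getElem?_cons_zero] at h
      injection h with h; subst h
      simp [List.set, countX_cons_inl, countX_cons_inr]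
    | succ k =>
      simp only [List.getElem?_cons_succ] at h
      rcases a with i' | i'
      · simp only [List.set, countX_cons_inl]
        have := ih k i j h
        omega
      · simp only [List.set, countX_cons_inr]
        exact ih k i j h

end OmegaAlg

namespace OmegaAlg

variable (K : Type*) [Field K] (q : K) (n : ℕ)

/-- Twist factor of a letter. -/
noncomputable def eta (a : OmegaLetter n) : K := Sum.elim (fun _ => (1:K)) (fun _ => -q⁻¹) a

lemma deRham_cons {δ : OmegaAlg K q n →ₗ[K] OmegaAlg K q n} (hδ : IsDeRham K q n δ)
    (a : OmegaLetter n) (w : List (OmegaLetter n)) :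
    δ (wordProd K q n (a :: w)) =
      Sum.elim (fun i => (q ^ countX n w) • wordProd K q n (Sum.inr i :: w))
        (fun _ => (0 : OmegaAlg K q n)) a
      + eta K q n a • (gen K q n a * δ (wordProd K q n w)) := by
  rw [hδ (a :: w), hδ w]
  refine (Fin.sum_univ_succ _).trans ?_
  congr 1
  · rcases a with i | i <;>
      simp [countY, countX, eta, List.take, List.drop, List.set]
  · rw [Finset.mul_sum, Finset.smul_sum]
    refine Finset.sum_congr rfl fun k _ => ?_
    have hget : (a :: w).get k.succ = w.get k := by simp
    rw [hget]
    rcases hg : w.get k with i | i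
    · simp only [Sum.elim_inl]
      have htake : (a :: w).take (k.succ : ℕ) = a :: w.take k := by
        simp [List.take_succ_cons]
      have hdrop : (a :: w).drop ((k.succ : ℕ) + 1) = w.drop ((k : ℕ) + 1) := by
        simp
      have hset : (a :: w).set (k.succ : ℕ) (Sum.inr i) = a :: w.set k (Sum.inr i) := by
        simp [List.set]
      rw [htake, hdrop, hset, wordProd_cons]
      rcases a with j | j <;>
        simp [eta, countY_cons_inl, countY_cons_inr, mul_smul_comm, smul_smul, pow_succ, neg_smul] <;>
        module
    · rcases a with j | j <;> simp [eta]

lemma koszul_cons {κ : OmegaAlg K q n →ₗ[K] OmegaAlg K q n} (hκ : IsKoszul K q n κ)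
    (a : OmegaLetter n) (w : List (OmegaLetter n)) :
    κ (wordProd K q n (a :: w)) =
      Sum.elim (fun _ => (0 : OmegaAlg K q n))
        (fun i => (q ^ countX n w) • wordProd K q n (Sum.inl i :: w)) a
      + eta K q n a • (gen K q n a * κ (wordProd K q n w)) := by
  rw [hκ (a :: w), hκ w]
  refine (Fin.sum_univ_succ _).trans ?_
  congr 1
  · rcases a with i | i <;>
      simp [countY, countX, eta, List.take, List.drop, List.set]
  · rw [Finset.mul_sum, Finset.smul_sum]
    refine Finset.sum_congr rfl fun k _ => ?_
    have hget : (a :: w).get k.succ = w.get k := by simp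
    rw [hget]
    rcases hg : w.get k with i | i
    · rcases a with j | j <;> simp [eta]
    · simp only [Sum.elim_inr]
      have htake : (a :: w).take (k.succ : ℕ) = a :: w.take k := by
        simp [List.take_succ_cons]
      have hdrop : (a :: w).drop ((k.succ : ℕ) + 1) = w.drop ((k : ℕ) + 1) := by
        simp
      have hset : (a :: w).set (k.succ : ℕ) (Sum.inl i) = a :: w.set k (Sum.inl i) := by
        simp [List.set]
      rw [htake, hdrop, hset, wordProd_cons]
      rcases a with j | j <;>
        simp [eta, countY_cons_inl, countY_cons_inr, mul_smul_comm, smul_smul, pow_succ, neg_smul] <;>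
        module


lemma deRham_mul_koszul {δ κ : OmegaAlg K q n →ₗ[K] OmegaAlg K q n}
    (hδ : IsDeRham K q n δ) (hκ : IsKoszul K q n κ)
    (a : OmegaLetter n) (w : List (OmegaLetter n)) :
    δ (gen K q n a * κ (wordProd K q n w)) =
      Sum.elim (fun i => (q ^ countX n w * q) • (gen K q n (Sum.inr i) * κ (wordProd K q n w)))
        (fun _ => (0 : OmegaAlg K q n)) a
      + eta K q n a • (gen K q n a * δ (κ (wordProd K q n w))) := by
  rw [hκ w]
  rw [map_sum δ, Finset.mul_sum, Finset.mul_sum, Finset.smul_sum, map_sum δ]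
  rcases a with i | i
  · simp only [Sum.elim_inl, eta, one_smul]
    rw [Finset.mul_sum, Finset.smul_sum, ← Finset.sum_add_distrib]
    refine Finset.sum_congr rfl fun k _ => ?_
    rcases hg : w.get k with j | j
    · simp
    · simp only [Sum.elim_inr]
      have hcX : countX n (w.set (k : ℕ) (Sum.inl j)) = countX n w + 1 :=
        countX_set_inl n w k j j (by rw [List.getElem?_eq_getElem k.isLt, ← hg]; rfl)
      rw [mul_smul_comm, map_smul, ← wordProd_cons, deRham_cons K q n hδ]
      simp only [Sum.elim_inl, eta, one_smul, hcX, pow_succ, wordProd_cons, map_smul,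
        smul_add, mul_smul_comm, smul_smul]
      module
  · simp only [Sum.elim_inr, eta]
    rw [zero_add]
    refine Finset.sum_congr rfl fun k _ => ?_
    rcases hg : w.get k with j | j
    · simp
    · simp only [Sum.elim_inr]
      rw [mul_smul_comm, map_smul, ← wordProd_cons, deRham_cons K q n hδ]
      simp only [Sum.elim_inr, eta, zero_add, wordProd_cons, map_smul,
        smul_add, mul_smul_comm, smul_smul, neg_smul, smul_neg]
      module

lemma koszul_mul_deRham (hq : q ≠ 0) {δ κ : OmegaAlg K q n →ₗ[K] OmegaAlg K q n}
    (hδ : IsDeRham K q n δ) (hκ : IsKoszul K q n κ)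
    (a : OmegaLetter n) (w : List (OmegaLetter n)) :
    κ (gen K q n a * δ (wordProd K q n w)) =
      Sum.elim (fun _ => (0 : OmegaAlg K q n))
        (fun i => (q ^ countX n w * q⁻¹) • (gen K q n (Sum.inl i) * δ (wordProd K q n w))) a
      + eta K q n a • (gen K q n a * κ (δ (wordProd K q n w))) := by
  rw [hδ w]
  rw [map_sum κ, Finset.mul_sum, Finset.mul_sum, Finset.smul_sum, map_sum κ]
  rcases a with i | i
  · simp only [Sum.elim_inl, eta, one_smul]
    rw [zero_add]
    refine Finset.sum_congr rfl fun k _ => ?_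
    rcases hg : w.get k with j | j
    · simp only [Sum.elim_inl]
      rw [mul_smul_comm, map_smul, ← wordProd_cons, koszul_cons K q n hκ]
      simp only [Sum.elim_inl, eta, zero_add, one_smul, wordProd_cons, map_smul,
        smul_add, mul_smul_comm, smul_smul]
    · simp
  · simp only [Sum.elim_inr, eta]
    rw [Finset.mul_sum, Finset.smul_sum, ← Finset.sum_add_distrib]
    refine Finset.sum_congr rfl fun k _ => ?_
    rcases hg : w.get k with j | j
    · simp only [Sum.elim_inl]
      have hcX : countX n (w.set (k : ℕ) (Sum.inr j)) + 1 = countX n w :=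
        countX_set_inr n w k j j (by rw [List.getElem?_eq_getElem k.isLt, ← hg]; rfl)
      have hpow : q ^ countX n (w.set (k : ℕ) (Sum.inr j)) = q ^ countX n w * q⁻¹ := by
        rw [← hcX, pow_succ, mul_assoc, mul_inv_cancel₀ hq, mul_one]
      rw [mul_smul_comm, map_smul, ← wordProd_cons, koszul_cons K q n hκ]
      simp only [Sum.elim_inr, eta, hpow, wordProd_cons, map_smul,
        smul_add, mul_smul_comm, smul_smul, neg_smul, smul_neg]
      module
    · simp


lemma key_lemma (hq : q ≠ 0) {δ κ : OmegaAlg K q n →ₗ[K] OmegaAlg K q n}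
    (hδ : IsDeRham K q n δ) (hκ : IsKoszul K q n κ) :
    ∀ w : List (OmegaLetter n),
      (-q⁻¹) ^ 2 • δ (κ (wordProd K q n w)) + κ (δ (wordProd K q n w)) =
        (((-q⁻¹) ^ 2) ^ countY n w * ∑ t ∈ Finset.range w.length, (q ^ 2) ^ t) •
          wordProd K q n w := by
  intro w
  induction w with
  | nil =>
    have h1 : δ (wordProd K q n []) = 0 := by rw [hδ]; simp
    have h2 : κ (wordProd K q n []) = 0 := by rw [hκ]; simp
    simp [h1, h2]
  | cons a w ih =>
    have hsub : κ (δ (wordProd K q n w)) =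
        (((-q⁻¹) ^ 2) ^ countY n w * ∑ t ∈ Finset.range w.length, (q ^ 2) ^ t) •
          wordProd K q n w - (-q⁻¹) ^ 2 • δ (κ (wordProd K q n w)) :=
      eq_sub_of_add_eq' ih
    rw [deRham_cons K q n hδ, koszul_cons K q n hκ]
    rcases a with i | i
    · simp only [Sum.elim_inl, Sum.elim_inr, eta, one_smul, zero_add, map_add, map_smul]
      rw [deRham_mul_koszul K q n hδ hκ, koszul_cons K q n hκ,
        koszul_mul_deRham K q n hq hδ hκ]
      simp only [Sum.elim_inl, Sum.elim_inr, eta, one_smul, zero_add, zero_smul, add_zero]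
      rw [hsub]
      simp only [wordProd_cons, countY_cons_inl, countY_cons_inr, List.length_cons,
        Finset.sum_range_succ, smul_add, smul_sub, mul_smul_comm, smul_smul, neg_smul,
        smul_neg, mul_sub]
      rw [← countX_add_countY n w]
      simp only [pow_add, pow_succ]
      have hr : ((-q⁻¹) ^ 2) ^ countY n w * (q ^ 2) ^ countY n w = 1 := by
        rw [neg_sq, inv_pow, inv_pow, inv_mul_cancel₀ (pow_ne_zero _ (pow_ne_zero _ hq))]
      have hc : q * q⁻¹ = 1 := mul_inv_cancel₀ hq
      match_scalars
      · linear_combination (q ^ countX n w * q⁻¹) * hc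
      · ring
      · linear_combination (-(q ^ countX n w * q ^ countX n w)) * hr
    · simp only [Sum.elim_inl, Sum.elim_inr, eta, one_smul, zero_add, map_add, map_smul,
        neg_smul, smul_neg, map_neg]
      rw [deRham_mul_koszul K q n hδ hκ, deRham_cons K q n hδ,
        koszul_mul_deRham K q n hq hδ hκ]
      simp only [Sum.elim_inl, Sum.elim_inr, eta, one_smul, zero_add, zero_smul, add_zero]
      rw [hsub]
      simp only [wordProd_cons, countY_cons_inl, countY_cons_inr, List.length_cons,
        Finset.sum_range_succ, smul_add, smul_sub, mul_smul_comm, smul_smul, neg_smul,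
        smul_neg, mul_sub]
      rw [← countX_add_countY n w]
      simp only [pow_add, pow_succ]
      have hr : ((-q⁻¹) ^ 2) ^ countY n w * (q ^ 2) ^ countY n w = 1 := by
        rw [neg_sq, inv_pow, inv_pow, inv_mul_cancel₀ (pow_ne_zero _ (pow_ne_zero _ hq))]
      have hc : q * q⁻¹ = 1 := mul_inv_cancel₀ hq
      match_scalars
      · linear_combination (-((-q⁻¹) ^ 2 * (q ^ countX n w * q ^ countX n w))) * hr
      · ring
      · ring

end OmegaAlg

/-- On `Ω^i_d = K^{d−i}_d`, the quantum de Rham differential `δ` and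
the Koszul differential `κ` satisfy the homotopy identity
`(−q⁻¹)² δκ + κδ = ((−q⁻¹)²)^i (d)_{q²} · Id`, where
`(d)_{q²} = 1 + q² + ⋯ + q^{2(d−1)}`. -/
theorem stmt10 (K : Type*) [Field K] (q : K) (hq : q ≠ 0) (n : ℕ)
    (δ κ : OmegaAlg K q n →ₗ[K] OmegaAlg K q n)
    (hδ : OmegaAlg.IsDeRham K q n δ) (hκ : OmegaAlg.IsKoszul K q n κ)
    (i d : ℕ) (a : OmegaAlg K q n) (ha : a ∈ OmegaAlg.piece K q n i d) :
    (-q⁻¹) ^ 2 • δ (κ a) + κ (δ a) =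
      ((-q⁻¹) ^ 2) ^ i • (∑ t ∈ Finset.range d, (q ^ 2) ^ t) • a := by
  induction ha using Submodule.span_induction with
  | mem x hx =>
    obtain ⟨w, hlen, hcY, rfl⟩ := hx
    rw [OmegaAlg.key_lemma K q n hq hδ hκ w, hcY, hlen, mul_smul]
  | zero => simp
  | add x y hx hy ihx ihy =>
    simp only [map_add, smul_add]
    rw [add_add_add_comm, ihx, ihy, ← smul_add, ← smul_add]
  | smul c x hx ihx =>
    simp only [map_smul]
    rw [smul_comm ((-q⁻¹) ^ 2) c, ← smul_add, ihx, smul_comm _ c, smul_comm _ c]
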